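/- arXiv:1006.5583 — 4 statements merged into one kernel-verified Lean document; each statement's English description precedes it below -/
import Mathlib

section
/- Let f : (1,∞) → ℝ be a positive C² function with |f''| bounded, such that f is nonincreasing on some interval (a,∞) with a > 1, and such that f''(x) → 0 as x → ∞. Then f'(x)²/f(x) → 0 as x → ∞; in particular, for all sufficiently large x one has f'(x)² ≤ 2 f(x) · sup_{s ≥ x} |f''(s)|. -/
open Filter Set

/-- If `f` is a positive twice continuously differentiable function on `(1,∞)` with `|f''|`
bounded, `f` nonincreasing on some `(a,∞)` with `a > 1`, and `f''(x) → 0` as `x → ∞`, then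
`f'(x)²/f(x) → 0` as `x → ∞`; in particular, for all sufficiently large `x`,
`f'(x)² ≤ 2 f(x) · sup_{s ≥ x} |f''(s)|`. -/
theorem stmt_3 (f f' f'' : ℝ → ℝ) (a : ℝ) (ha : 1 < a)
    (hderiv1 : ∀ x ∈ Set.Ioi (1 : ℝ), HasDerivAt f (f' x) x)
    (hderiv2 : ∀ x ∈ Set.Ioi (1 : ℝ), HasDerivAt f' (f'' x) x)
    (hcont : ContinuousOn f'' (Set.Ioi (1 : ℝ)))
    (hpos : ∀ x ∈ Set.Ioi (1 : ℝ), 0 < f x)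
    (hf''bdd : BddAbove ((fun s => |f'' s|) '' Set.Ioi (1 : ℝ)))
    (hmono : AntitoneOn f (Set.Ioi a))
    (hf''0 : Filter.Tendsto f'' Filter.atTop (nhds 0)) :
    Filter.Tendsto (fun x => (f' x) ^ 2 / f x) Filter.atTop (nhds 0) ∧
      ∀ᶠ x in Filter.atTop,
        (f' x) ^ 2 ≤ 2 * f x * sSup ((fun s => |f'' s|) '' Set.Ici x) := by
  set M : ℝ → ℝ := fun x => sSup ((fun s => |f'' s|) '' Set.Ici x) with hMdef
  have hbdd : ∀ x : ℝ, 1 < x → BddAbove ((fun s => |f'' s|) '' Set.Ici x) := by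
    intro x hx
    exact BddAbove.mono (Set.image_mono fun y hy => lt_of_lt_of_le hx hy) hf''bdd
  have hMle : ∀ x : ℝ, 1 < x → ∀ y : ℝ, x ≤ y → |f'' y| ≤ M x := fun x hx y hy =>
    le_csSup (hbdd x hx) ⟨y, hy, rfl⟩
  have hMnn : ∀ x : ℝ, 1 < x → 0 ≤ M x := fun x hx =>
    (abs_nonneg _).trans (hMle x hx x le_rfl)
  -- the key pointwise inequality
  have key : ∀ x : ℝ, a < x → (f' x) ^ 2 ≤ 2 * f x * M x := by
    intro x hax
    have hx1 : (1:ℝ) < x := ha.trans hax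
    have hIci : Set.Ici x ⊆ Set.Ioi (1 : ℝ) := fun y hy => lt_of_lt_of_le hx1 hy
    have hb : ∀ y : ℝ, x ≤ y → f'' y ≤ M x := fun y hy =>
      (le_abs_self _).trans (hMle x hx1 y hy)
    -- f' x ≤ 0
    have hf'le : f' x ≤ 0 := by
      have hslope : Filter.Tendsto (slope f x) (nhdsWithin x (Set.Ioi x)) (nhds (f' x)) :=
        ((hasDerivAt_iff_tendsto_slope.mp (hderiv1 x (Set.mem_Ioi.mpr hx1)))).mono_left
          (nhdsWithin_mono x fun y hy => Set.mem_compl_singleton_iff.mpr (ne_of_gt hy))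
      refine le_of_tendsto hslope ?_
      filter_upwards [self_mem_nhdsWithin] with y hy
      rw [slope_def_field]
      have hfy : f y ≤ f x := hmono (Set.mem_Ioi.mpr hax) (Set.mem_Ioi.mpr (hax.trans hy)) hy.le
      have : (0:ℝ) < y - x := sub_pos.mpr hy
      exact div_nonpos_of_nonpos_of_nonneg (by linarith) (by linarith)
    -- Taylor-type bound via two monotonicity arguments
    set G' : ℝ → ℝ := fun y => f' y - f' x - (y - x) * M x with hG'def
    set G : ℝ → ℝ := fun y => f y - f x - (y - x) * f' x - (y - x) ^ 2 * M x / 2 with hGdef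
    have hG'deriv : ∀ y ∈ Set.Ioi (1:ℝ), HasDerivAt G' (f'' y - M x) y := by
      intro y hy
      have h1 := (hderiv2 y hy).sub_const (f' x)
      have h2 : HasDerivAt (fun y => (y - x) * M x) (M x) y := by
        simpa using ((hasDerivAt_id y).sub_const x).mul_const (M x)
      exact h1.sub h2
    have hG'anti : AntitoneOn G' (Set.Ici x) := by
      apply antitoneOn_of_hasDerivWithinAt_nonpos (convex_Ici x)
      · exact fun y hy => ((hG'deriv y (hIci hy)).continuousAt).continuousWithinAt
      · intro y hy
        rw [interior_Ici] at hy
        exact (hG'deriv y (hIci (Set.Ioi_subset_Ici_self hy))).hasDerivWithinAt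
      · intro y hy
        rw [interior_Ici] at hy
        exact sub_nonpos.mpr (hb y hy.le)
    have hG'le : ∀ y : ℝ, x ≤ y → G' y ≤ 0 := by
      intro y hy
      have h0 := hG'anti Set.self_mem_Ici hy hy
      have : G' x = 0 := by simp [hG'def]
      linarith
    have hGderiv : ∀ y ∈ Set.Ioi (1:ℝ), HasDerivAt G (G' y) y := by
      intro y hy
      have h1 := (hderiv1 y hy).sub_const (f x)
      have h2 : HasDerivAt (fun y => (y - x) * f' x) (f' x) y := by
        simpa using ((hasDerivAt_id y).sub_const x).mul_const (f' x)
      have h3 : HasDerivAt (fun y => (y - x) ^ 2 * M x / 2) ((y - x) * M x) y := by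
        have := ((((hasDerivAt_id y).sub_const x).pow 2).mul_const (M x)).div_const 2
        refine this.congr_deriv ?_
        simp only [id_eq]
        ring
      have := (h1.sub h2).sub h3
      exact this
    have hGanti : AntitoneOn G (Set.Ici x) := by
      apply antitoneOn_of_hasDerivWithinAt_nonpos (convex_Ici x)
      · exact fun y hy => ((hGderiv y (hIci hy)).continuousAt).continuousWithinAt
      · intro y hy
        rw [interior_Ici] at hy
        exact (hGderiv y (hIci (Set.Ioi_subset_Ici_self hy))).hasDerivWithinAt
      · intro y hy
        rw [interior_Ici] at hy
        exact hG'le y hy.le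
    have hq : ∀ h : ℝ, 0 ≤ h → 0 < f x + h * f' x + h ^ 2 * M x / 2 := by
      intro h hh
      have hmem : x + h ∈ Set.Ici x := by simp [hh]
      have h1 := hGanti Set.self_mem_Ici hmem (by linarith)
      have h2 : G x = 0 := by simp [hGdef]
      have h3 : G (x + h) = f (x + h) - f x - h * f' x - h ^ 2 * M x / 2 := by
        simp [hGdef]
      have h4 : 0 < f (x + h) := hpos (x + h) (Set.mem_Ioi.mpr (by linarith))
      rw [h3, h2] at h1
      linarith
    rcases (hMnn x hx1).lt_or_eq with hM0 | hM0
    · have hh : (0:ℝ) ≤ -f' x / M x := div_nonneg (by linarith) hM0.le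
      have := hq (-f' x / M x) hh
      have hMne : M x ≠ 0 := ne_of_gt hM0
      rw [div_pow] at this
      field_simp at this
      nlinarith [this, sq_nonneg (f' x)]
    · -- M x = 0 : show f' x = 0
      have hf'0 : f' x = 0 := by
        by_contra hne
        have hlt : f' x < 0 := lt_of_le_of_ne hf'le hne
        have hh : (0:ℝ) ≤ f x / (-f' x) := div_nonneg (hpos x (Set.mem_Ioi.mpr hx1)).le (by linarith)
        have := hq (f x / (-f' x)) hh
        rw [← hM0] at this
        have hne' : -f' x ≠ 0 := by linarith
        field_simp at this
        norm_num at this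
      rw [hf'0, ← hM0]
      norm_num
  -- tendsto of M to 0
  have hMto : Filter.Tendsto M Filter.atTop (nhds 0) := by
    rw [NormedAddCommGroup.tendsto_nhds_zero]
    intro ε hε
    have h1 : ∀ᶠ s in Filter.atTop, |f'' s| < ε / 2 := by
      have := Metric.tendsto_nhds.mp hf''0 (ε / 2) (by linarith)
      simpa [Real.dist_eq] using this
    obtain ⟨N, hN⟩ := Filter.eventually_atTop.mp h1
    filter_upwards [Filter.eventually_ge_atTop N, Filter.eventually_gt_atTop (1:ℝ)] with x hxN hx1
    have hle : M x ≤ ε / 2 := by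
      refine csSup_le ⟨|f'' x|, ⟨x, Set.self_mem_Ici, rfl⟩⟩ ?_
      rintro b ⟨y, hy, rfl⟩
      exact (hN y (le_trans hxN hy)).le
    rw [Real.norm_eq_abs, abs_of_nonneg (hMnn x hx1)]
    linarith
  constructor
  · have h2M : Filter.Tendsto (fun x => 2 * M x) Filter.atTop (nhds 0) := by
      simpa using hMto.const_mul 2
    apply tendsto_of_tendsto_of_tendsto_of_le_of_le' tendsto_const_nhds h2M
    · filter_upwards [Filter.eventually_gt_atTop (1:ℝ)] with x hx
      exact div_nonneg (sq_nonneg _) (hpos x (Set.mem_Ioi.mpr hx)).le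
    · filter_upwards [Filter.eventually_gt_atTop a] with x hx
      have hf := hpos x (Set.mem_Ioi.mpr (ha.trans hx))
      rw [div_le_iff₀ hf]
      calc (f' x) ^ 2 ≤ 2 * f x * M x := key x hx
        _ = 2 * M x * f x := by ring
  · filter_upwards [Filter.eventually_gt_atTop a] with x hx
    exact key x hx
end

section
/- Let f : (1,∞) → ℝ be a positive C² function with f and |f''| bounded, f nonincreasing on some interval (a,∞) with a > 1, and f(x) → 0, f''(x) → 0 as x → ∞. Define V(x) = (1/4)(f'(x)/f(x))² + (1/2)(f'/f)'(x). Then f(x)·V(x) → 0 as x → ∞. -/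
/-- Let `f` be a positive twice continuously differentiable function on `(1,∞)` with `f` and
`|f''|` bounded, `f` nonincreasing on some `(a,∞)` with `a > 1`, and `f(x) → 0`,
`f''(x) → 0` as `x → ∞`. Define `V(x) = (1/4)(f'(x)/f(x))² + (1/2)(f'/f)'(x)`.
Then `f(x)·V(x) → 0` as `x → ∞`. -/
theorem stmt_4 (f f' f'' : ℝ → ℝ) (a : ℝ) (ha : 1 < a)
    (hderiv1 : ∀ x ∈ Set.Ioi (1 : ℝ), HasDerivAt f (f' x) x)
    (hderiv2 : ∀ x ∈ Set.Ioi (1 : ℝ), HasDerivAt f' (f'' x) x)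
    (hcont : ContinuousOn f'' (Set.Ioi (1 : ℝ)))
    (hpos : ∀ x ∈ Set.Ioi (1 : ℝ), 0 < f x)
    (hfbdd : BddAbove (f '' Set.Ioi (1 : ℝ)))
    (hf''bdd : BddAbove ((fun s => |f'' s|) '' Set.Ioi (1 : ℝ)))
    (hmono : AntitoneOn f (Set.Ioi a))
    (hf0 : Filter.Tendsto f Filter.atTop (nhds 0))
    (hf''0 : Filter.Tendsto f'' Filter.atTop (nhds 0))
    (V : ℝ → ℝ)
    (hV : ∀ x ∈ Set.Ioi (1 : ℝ),
      V x = (1 / 4) * (f' x / f x) ^ 2 + (1 / 2) * deriv (fun t => f' t / f t) x) :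
    Filter.Tendsto (fun x => f x * V x) Filter.atTop (nhds 0) := by
  rw [NormedAddCommGroup.tendsto_nhds_zero]
  intro ε hε
  set δ := ε / 2 with hδdef
  have hδ : 0 < δ := by positivity
  obtain ⟨X₁, hX₁⟩ := (Metric.tendsto_atTop.mp hf''0 δ hδ)
  filter_upwards [Filter.eventually_ge_atTop (max X₁ (a + 1))] with x hx
  have hxX₁ : X₁ ≤ x := le_trans (le_max_left _ _) hx
  have hxa : a < x := by have := le_trans (le_max_right _ _) hx; linarith
  have hx1 : (1 : ℝ) < x := lt_trans ha hxa
  have hfx : 0 < f x := hpos x hx1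
  -- formula for f x * V x
  have hd : HasDerivAt (fun t => f' t / f t) ((f'' x * f x - f' x * f' x) / f x ^ 2) x :=
    (hderiv2 x hx1).div (hderiv1 x hx1) (ne_of_gt hfx)
  have key : f x * V x = f'' x / 2 - f' x ^ 2 / (4 * f x) := by
    rw [hV x hx1, hd.deriv]
    field_simp
    ring
  -- bound f' x ^ 2 ≤ 4 * δ * f x via two mean value theorems
  set h := Real.sqrt (f x / δ) with hhdef
  have hh : 0 < h := Real.sqrt_pos.mpr (by positivity)
  have hh2 : h ^ 2 = f x / δ := Real.sq_sqrt (by positivity)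
  have hsub : Set.Icc x (x + h) ⊆ Set.Ioi (1 : ℝ) := by
    intro t ht
    exact lt_of_lt_of_le hx1 ht.1
  obtain ⟨ξ, hξ, hslope⟩ := exists_hasDerivAt_eq_slope f f' (show x < x + h by linarith)
    (fun t ht => ((hderiv1 t (hsub ht)).continuousAt).continuousWithinAt)
    (fun t ht => hderiv1 t (hsub (Set.Ioo_subset_Icc_self ht)))
  obtain ⟨η, hη, hslope2⟩ := exists_hasDerivAt_eq_slope f' f'' hξ.1
    (fun t ht => ((hderiv2 t (hsub ⟨ht.1, le_trans ht.2 (le_of_lt hξ.2)⟩)).continuousAt).continuousWithinAt)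
    (fun t ht => hderiv2 t (hsub ⟨le_of_lt ht.1, le_trans (le_of_lt ht.2) (le_of_lt hξ.2)⟩))
  have hfxh : 0 < f (x + h) := hpos _ (lt_trans hx1 (by linarith))
  have hfle : f (x + h) ≤ f x := hmono (Set.mem_Ioi.mpr hxa)
    (Set.mem_Ioi.mpr (by linarith)) (by linarith)
  have hη'' : |f'' η| ≤ δ := by
    have := hX₁ η (le_trans hxX₁ (le_of_lt hη.1))
    rw [Real.dist_eq, sub_zero] at this
    exact le_of_lt this
  have hξx : 0 < ξ - x := by linarith [hξ.1]
  have hξh : ξ - x ≤ h := by linarith [hξ.2]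
  -- h * f' x = (f (x+h) - f x) - h * (f'' η * (ξ - x))
  have e1 : f' ξ * h = f (x + h) - f x := by
    rw [hslope]
    field_simp
    rw [add_sub_cancel_left, mul_div_cancel_left₀ _ hh.ne']
  have e2 : f' x = f' ξ - f'' η * (ξ - x) := by
    rw [hslope2]
    field_simp
    ring
  have habs : |h * f' x| ≤ 2 * f x := by
    have : h * f' x = (f (x + h) - f x) - h * (f'' η * (ξ - x)) := by
      rw [e2]; ring_nf; rw [mul_comm h (f' ξ), e1]; ring
    rw [this]
    have h1 : |f (x + h) - f x| ≤ f x := by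
      rw [abs_le]; constructor <;> linarith
    have h2 : |h * (f'' η * (ξ - x))| ≤ δ * h ^ 2 := by
      rw [abs_mul, abs_mul, abs_of_pos hh, abs_of_pos hξx]
      calc h * (|f'' η| * (ξ - x)) ≤ h * (δ * h) := by
            apply mul_le_mul_of_nonneg_left _ (le_of_lt hh)
            exact mul_le_mul hη'' hξh (le_of_lt hξx) (le_of_lt hδ)
        _ = δ * h ^ 2 := by ring
    have hδh2 : δ * h ^ 2 = f x := by
      rw [hh2]; field_simp
    calc |f (x + h) - f x - h * (f'' η * (ξ - x))|
        ≤ |f (x + h) - f x| + |h * (f'' η * (ξ - x))| := abs_sub _ _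
      _ ≤ f x + δ * h ^ 2 := add_le_add h1 h2
      _ = 2 * f x := by rw [hδh2]; ring
  have hsq : f' x ^ 2 ≤ 4 * δ * f x := by
    have hsq1 : (h * f' x) ^ 2 ≤ (2 * f x) ^ 2 := by
      rw [← sq_abs (h * f' x)]
      exact pow_le_pow_left₀ (abs_nonneg _) habs 2
    have : (f x / δ) * f' x ^ 2 ≤ 4 * f x ^ 2 := by
      rw [← hh2]; nlinarith
    have hfδ : 0 < f x / δ := by positivity
    rw [div_mul_eq_mul_div, div_le_iff₀ hδ] at this
    nlinarith
  -- conclude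
  have hf''x : |f'' x| ≤ δ := by
    have := hX₁ x hxX₁
    rw [Real.dist_eq, sub_zero] at this
    exact le_of_lt this
  have hterm : f' x ^ 2 / (4 * f x) ≤ δ := by
    rw [div_le_iff₀ (by positivity)]
    nlinarith
  have hterm0 : 0 ≤ f' x ^ 2 / (4 * f x) := by positivity
  rw [key, Real.norm_eq_abs]
  calc |f'' x / 2 - f' x ^ 2 / (4 * f x)| ≤ |f'' x / 2| + |f' x ^ 2 / (4 * f x)| := abs_sub _ _
    _ = |f'' x| / 2 + f' x ^ 2 / (4 * f x) := by
        rw [abs_div, abs_of_nonneg hterm0]; norm_num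
    _ ≤ δ / 2 + δ := by linarith
    _ < ε := by rw [hδdef]; linarith
end

section
/- Let f : (1,∞) → ℝ be a positive C² function with f and |f''| bounded, f nonincreasing on some interval (a,∞) with a > 1, and f(x) → 0, f''(x) → 0 as x → ∞. Let σ > 0 be a constant. Define V(x) = (1/4)(f'(x)/f(x))² + (1/2)(f'/f)'(x) and W_σ(x) = V(x) + σ/f(x). Then W_σ(x) → ∞ as x → ∞. -/
set_option maxHeartbeats 1000000 in
/-- Let `f` be a positive twice continuously differentiable function on `(1,∞)` with `f` and
`|f''|` bounded, `f` nonincreasing on some `(a,∞)` with `a > 1`, and `f(x) → 0`,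
`f''(x) → 0` as `x → ∞`. Let `σ > 0` be a constant. With
`V(x) = (1/4)(f'(x)/f(x))² + (1/2)(f'/f)'(x)` and `W_σ(x) = V(x) + σ/f(x)`,
one has `W_σ(x) → ∞` as `x → ∞`. -/
theorem stmt_6 (f f' f'' : ℝ → ℝ) (σ a : ℝ) (hσ : 0 < σ) (ha : 1 < a)
    (hderiv1 : ∀ x ∈ Set.Ioi (1 : ℝ), HasDerivAt f (f' x) x)
    (hderiv2 : ∀ x ∈ Set.Ioi (1 : ℝ), HasDerivAt f' (f'' x) x)
    (hcont : ContinuousOn f'' (Set.Ioi (1 : ℝ)))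
    (hpos : ∀ x ∈ Set.Ioi (1 : ℝ), 0 < f x)
    (hfbdd : BddAbove (f '' Set.Ioi (1 : ℝ)))
    (hf''bdd : BddAbove ((fun s => |f'' s|) '' Set.Ioi (1 : ℝ)))
    (hmono : AntitoneOn f (Set.Ioi a))
    (hf0 : Filter.Tendsto f Filter.atTop (nhds 0))
    (hf''0 : Filter.Tendsto f'' Filter.atTop (nhds 0))
    (V W : ℝ → ℝ)
    (hV : ∀ x ∈ Set.Ioi (1 : ℝ),
      V x = (1 / 4) * (f' x / f x) ^ 2 + (1 / 2) * deriv (fun t => f' t / f t) x)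
    (hW : ∀ x ∈ Set.Ioi (1 : ℝ), W x = V x + σ / f x) :
    Filter.Tendsto W Filter.atTop Filter.atTop := by
  have hεpos : 0 < σ / 4 := by linarith
  -- eventually |f''| < σ/4
  have hf''ev : ∀ᶠ y in Filter.atTop, |f'' y| < σ / 4 := by
    have h1 : Filter.Tendsto (fun y => |f'' y|) Filter.atTop (nhds 0) := by
      simpa using hf''0.abs
    exact h1.eventually_lt_const hεpos
  obtain ⟨X₀, hX₀⟩ := Filter.eventually_atTop.1 hf''ev
  -- key eventual lower bound for W
  have key : ∀ᶠ x in Filter.atTop, σ / 2 * (f x)⁻¹ ≤ W x := by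
    filter_upwards [Filter.eventually_ge_atTop (max (max (a + 1) 2) X₀)] with x hx
    have hx2 : (2 : ℝ) ≤ x := le_trans (le_trans (le_max_right _ _) (le_max_left _ _)) hx
    have hxa : a < x := by
      have : a + 1 ≤ x := le_trans (le_trans (le_max_left _ _) (le_max_left _ _)) hx
      linarith
    have hxX0 : X₀ ≤ x := le_trans (le_max_right _ _) hx
    have hx1 : x ∈ Set.Ioi (1 : ℝ) := by simp; linarith
    have hfx : 0 < f x := hpos x hx1
    -- the Landau estimate: f' x ^ 2 ≤ σ * f x
    set ε : ℝ := σ / 4 with hεdef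
    set s : ℝ := Real.sqrt (ε * f x) with hsdef
    have hs2 : s ^ 2 = ε * f x := Real.sq_sqrt (by positivity)
    have hspos : 0 < s := Real.sqrt_pos.2 (by positivity)
    set h : ℝ := s / ε with hhdef
    have hhpos : 0 < h := by positivity
    have hmem : ∀ y ∈ Set.Icc x (x + h), y ∈ Set.Ioi (1 : ℝ) := by
      intro y hy
      have := hy.1
      simp only [Set.mem_Ioi]
      linarith
    have hcf : ContinuousOn f (Set.Icc x (x + h)) := fun y hy =>
      ((hderiv1 y (hmem y hy)).continuousAt).continuousWithinAt
    obtain ⟨c, hc, hcs⟩ := exists_hasDerivAt_eq_slope f f' (by linarith : x < x + h) hcf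
      (fun y hy => hderiv1 y (hmem y (Set.mem_Icc_of_Ioo hy)))
    have hcx : x < c := hc.1
    have hch : c < x + h := hc.2
    have hcf' : ContinuousOn f' (Set.Icc x c) := fun y hy =>
      ((hderiv2 y (hmem y ⟨hy.1, by linarith [hy.2]⟩)).continuousAt).continuousWithinAt
    obtain ⟨d, hd, hds⟩ := exists_hasDerivAt_eq_slope f' f'' hcx hcf'
      (fun y hy => hderiv2 y (hmem y ⟨le_of_lt hy.1, by linarith [hy.2]⟩))
    -- f' x = f' c - f'' d * (c - x)
    have hfx' : f' x = f' c - f'' d * (c - x) := by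
      have hne : c - x ≠ 0 := by linarith [hcx]
      field_simp at hds
      linarith [hds]
    -- bound |f' c| ≤ f x / h
    have hfxh : 0 < f (x + h) := hpos _ (hmem _ ⟨by linarith, le_refl _⟩)
    have hfle : f (x + h) ≤ f x :=
      hmono (Set.mem_Ioi.2 hxa) (Set.mem_Ioi.2 (by linarith)) (by linarith)
    have hfc : |f' c| ≤ f x / h := by
      have : f' c = (f (x + h) - f x) / h := by
        rw [hcs]; congr 1; ring
      rw [this, abs_div, abs_of_pos hhpos]
      have habs : |f (x + h) - f x| ≤ f x := abs_le.2 ⟨by linarith, by linarith⟩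
      gcongr
    -- bound |f'' d|
    have hfd : |f'' d| < ε := hX₀ d (by linarith [hd.1])
    have hεh : ε * h = s := by
      rw [hhdef]; field_simp
    have hfxhs : f x / h = s := by
      rw [hhdef]
      rw [div_div_eq_mul_div]
      rw [div_eq_iff (ne_of_gt hspos)]
      nlinarith [hs2]
    have hflx : |f' x| ≤ 2 * s := by
      rw [hfx']
      calc |f' c - f'' d * (c - x)| ≤ |f' c| + |f'' d * (c - x)| := abs_sub _ _
        _ ≤ f x / h + ε * h := by
            have h1 : |f'' d * (c - x)| = |f'' d| * (c - x) := by
              rw [abs_mul, abs_of_nonneg (by linarith : (0:ℝ) ≤ c - x)]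
            rw [h1]
            have h2 : |f'' d| * (c - x) ≤ ε * h := by
              apply mul_le_mul (le_of_lt hfd) (by linarith) (by linarith) (le_of_lt hεpos)
            linarith [hfc]
        _ = 2 * s := by rw [hfxhs, hεh]; ring
    have hsq : f' x ^ 2 ≤ σ * f x := by
      have h1 : f' x ^ 2 ≤ (2 * s) ^ 2 := by
        have := abs_nonneg (f' x)
        nlinarith [hflx, sq_abs (f' x)]
      nlinarith [hs2]
    -- compute the derivative of f'/f at x
    have hdq : HasDerivAt (fun t => f' t / f t)
        ((f'' x * f x - f' x * f' x) / (f x) ^ 2) x :=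
      (hderiv2 x hx1).div (hderiv1 x hx1) (ne_of_gt hfx)
    have hf''x : -ε ≤ f'' x := by
      have := hX₀ x hxX0
      rw [abs_lt] at this
      linarith [this.1]
    -- put everything together
    have hEq : W x - σ / 2 * (f x)⁻¹ =
        (-(1/4) * f' x ^ 2 + (1/2) * f'' x * f x + (σ/2) * f x) / (f x) ^ 2 := by
      rw [hW x hx1, hV x hx1, hdq.deriv]
      field_simp
      ring
    have hN : 0 ≤ (-(1/4) * f' x ^ 2 + (1/2) * f'' x * f x + (σ/2) * f x) / (f x) ^ 2 := by
      apply div_nonneg ?_ (by positivity)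
      nlinarith [hsq, hf''x, hfx]
    linarith [hEq, hN]
  -- σ/2 * (f x)⁻¹ → ∞
  have hf0' : Filter.Tendsto f Filter.atTop (nhdsWithin 0 (Set.Ioi 0)) := by
    apply tendsto_nhdsWithin_of_tendsto_nhds_of_eventually_within _ hf0
    filter_upwards [Filter.eventually_gt_atTop (1 : ℝ)] with x hx
    exact hpos x hx
  have hinv : Filter.Tendsto (fun x => (f x)⁻¹) Filter.atTop Filter.atTop := by
    exact hf0'.inv_tendsto_nhdsGT_zero
  have hhalf : Filter.Tendsto (fun x => σ / 2 * (f x)⁻¹) Filter.atTop Filter.atTop :=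
    hinv.const_mul_atTop (by linarith)
  exact Filter.tendsto_atTop_mono' _ key hhalf
end

section
/- Let f, σ, κ : (1,∞) → ℝ be functions such that for every x > 1 one has f(x) > 0, σ(x) > 0, κ(x) ∈ (0, π/(2 f(x))) and κ(x) · tan(κ(x) f(x)) = σ(x). If σ is bounded and f(x) → 0 as x → ∞, then f(x)·κ(x) → 0 as x → ∞. -/
open Real

/-- Let `f, σ, κ : (1,∞) → ℝ` be such that for every `x > 1`, `f(x) > 0`, `σ(x) > 0`,
`κ(x) ∈ (0, π/(2 f(x)))` and `κ(x) · tan(κ(x) f(x)) = σ(x)`. If `σ` is bounded and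
`f(x) → 0` as `x → ∞`, then `f(x)·κ(x) → 0` as `x → ∞`. -/
theorem stmt_11 (f σ κ : ℝ → ℝ)
    (hf : ∀ x ∈ Set.Ioi (1 : ℝ), 0 < f x)
    (hσ : ∀ x ∈ Set.Ioi (1 : ℝ), 0 < σ x)
    (hκ : ∀ x ∈ Set.Ioi (1 : ℝ), κ x ∈ Set.Ioo 0 (π / (2 * f x)))
    (heq : ∀ x ∈ Set.Ioi (1 : ℝ), κ x * Real.tan (κ x * f x) = σ x)
    (hσbdd : ∃ C : ℝ, ∀ x ∈ Set.Ioi (1 : ℝ), σ x ≤ C)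
    (hf0 : Filter.Tendsto f Filter.atTop (nhds 0)) :
    Filter.Tendsto (fun x => f x * κ x) Filter.atTop (nhds 0) := by
  obtain ⟨C, hC⟩ := hσbdd
  have hC0 : 0 ≤ C := le_trans (hσ 2 (by norm_num)).le (hC 2 (by norm_num))
  -- key bound: for x > 1, (f x * κ x)^2 ≤ C * f x
  have key : ∀ x ∈ Set.Ioi (1 : ℝ), (f x * κ x) ^ 2 ≤ C * f x := by
    intro x hx
    have hfx := hf x hx
    have hκx := hκ x hx
    have hθpos : 0 < κ x * f x := mul_pos hκx.1 hfx
    have hθlt : κ x * f x < π / 2 := by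
      calc κ x * f x < π / (2 * f x) * f x :=
            mul_lt_mul_of_pos_right hκx.2 hfx
        _ = π / 2 := by field_simp
    have htan : κ x * f x < Real.tan (κ x * f x) := Real.lt_tan hθpos hθlt
    have h1 : (κ x * f x) ^ 2 ≤ (κ x * f x) * Real.tan (κ x * f x) := by
      rw [sq]
      exact mul_le_mul_of_nonneg_left htan.le hθpos.le
    have h2 : (κ x * f x) * Real.tan (κ x * f x) = σ x * f x := by
      rw [mul_right_comm, heq x hx]
    calc (f x * κ x) ^ 2 = (κ x * f x) ^ 2 := by ring
      _ ≤ σ x * f x := by rw [← h2]; exact h1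
      _ ≤ C * f x := mul_le_mul_of_nonneg_right (hC x hx) hfx.le
  have hupper : Filter.Tendsto (fun x => Real.sqrt (C * f x)) Filter.atTop (nhds 0) := by
    have : Filter.Tendsto (fun x => C * f x) Filter.atTop (nhds (C * 0)) :=
      hf0.const_mul C
    rw [mul_zero] at this
    have := (Real.continuous_sqrt.tendsto 0).comp this
    simpa [Real.sqrt_zero, Function.comp_def] using this
  apply tendsto_of_tendsto_of_tendsto_of_le_of_le' tendsto_const_nhds hupper
  · filter_upwards [Filter.eventually_gt_atTop (1 : ℝ)] with x hx
    exact (mul_pos (hf x hx) ((hκ x hx).1)).le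
  · filter_upwards [Filter.eventually_gt_atTop (1 : ℝ)] with x hx
    rw [Real.le_sqrt (mul_pos (hf x hx) ((hκ x hx).1)).le]
    exact key x hx
    exact mul_nonneg hC0 (hf x hx).le
end
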